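/- The simple graph G on vertex set {1,2,3,4,5,6,7} with edge set {{1,2},{1,3},{2,3},{2,4},{2,5},{2,7},{3,4},{3,6},{3,7},{4,5},{4,6},{5,6}} (graph number 932 in the Atlas of Graphs) has minimum rank 3 over the real numbers. -/

import Mathlib

/-- Edge list of graph number 932 in the Atlas of Graphs (vertices 1..7). -/
def atlas932Edges : List (ℕ × ℕ) := [(1,2),(1,3),(2,3),(2,4),(2,5),(2,7),(3,4),(3,6),(3,7),(4,5),(4,6),(5,6)]

section VecEval
variable {α : Type*} (a b c d e f g : α)
@[simp] lemma vec7_mk2 (h : (2:ℕ) < 7) : ![a,b,c,d,e,f,g] ⟨2,h⟩ = c := rfl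
@[simp] lemma vec7_mk3 (h : (3:ℕ) < 7) : ![a,b,c,d,e,f,g] ⟨3,h⟩ = d := rfl
@[simp] lemma vec7_mk4 (h : (4:ℕ) < 7) : ![a,b,c,d,e,f,g] ⟨4,h⟩ = e := rfl
@[simp] lemma vec7_mk5 (h : (5:ℕ) < 7) : ![a,b,c,d,e,f,g] ⟨5,h⟩ = f := rfl
@[simp] lemma vec7_mk6 (h : (6:ℕ) < 7) : ![a,b,c,d,e,f,g] ⟨6,h⟩ = g := rfl
@[simp] lemma vec7_lit5 : ![a,b,c,d,e,f,g] (5 : Fin 7) = f := rfl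
@[simp] lemma vec7_lit6 : ![a,b,c,d,e,f,g] (6 : Fin 7) = g := rfl
end VecEval

/-- The rank of a matrix is at least the size of any invertible square submatrix. -/
lemma rank_ge_of_submatrix (A : Matrix (Fin 7) (Fin 7) ℝ) (r c : Fin 3 → Fin 7)
    (h : IsUnit (A.submatrix r c).det) : 3 ≤ A.rank := by
  have hfac : A.submatrix r c =
      (Matrix.of fun (i : Fin 3) (k : Fin 7) => if k = r i then (1:ℝ) else 0) *
        (A * (Matrix.of fun (k : Fin 7) (j : Fin 3) => if k = c j then (1:ℝ) else 0)) := by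
    ext i j
    simp [Matrix.mul_apply, Finset.sum_ite_eq, Finset.sum_ite_eq']
  have h3 : (A.submatrix r c).rank = 3 := by
    have := Matrix.rank_of_isUnit _ ((Matrix.isUnit_iff_isUnit_det _).mpr h)
    simpa using this
  calc (3:ℕ) = (A.submatrix r c).rank := h3.symm
    _ ≤ (A * (Matrix.of fun (k : Fin 7) (j : Fin 3) => if k = c j then (1:ℝ) else 0)).rank := by
        rw [hfac]; exact Matrix.rank_mul_le_right _ _
    _ ≤ A.rank := Matrix.rank_mul_le_left _ _

/-- The 7 vectors in ℝ³ (rows), representing the 7 vertices. -/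
noncomputable def exBT : Matrix (Fin 7) (Fin 3) ℝ :=
  !![1,0,1; 1,1,4; 1,1,3; 1,1,1; 1,2,1; 1,3,1; 1,0,1]

/-- The same vectors with the last coordinate negated (signature (1,1,-1)). -/
noncomputable def exC : Matrix (Fin 3) (Fin 7) ℝ :=
  !![1,1,1,1,1,1,1; 0,1,1,1,2,3,0; -1,-4,-3,-1,-1,-1,-1]

/-- The indefinite Gram matrix of the 7 vectors. -/
noncomputable def exA : Matrix (Fin 7) (Fin 7) ℝ :=
  !![0,-3,-2,0,0,0,0;
     -3,-14,-10,-2,-1,0,-3;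
     -2,-10,-7,-1,0,1,-2;
     0,-2,-1,1,2,3,0;
     0,-1,0,2,4,6,0;
     0,0,1,3,6,9,0;
     0,-3,-2,0,0,0,0]

lemma exA_fac : exA = exBT * exC := by
  ext i j
  fin_cases i <;> fin_cases j <;>
    norm_num [exA, exBT, exC, Matrix.mul_apply, Fin.sum_univ_three, Matrix.cons_val, Matrix.cons_val_two, Matrix.vecHead, Matrix.vecTail]

lemma exA_rank_le : exA.rank ≤ 3 := by
  rw [exA_fac]
  exact (Matrix.rank_mul_le_left _ _).trans (by simpa using Matrix.rank_le_card_width exBT)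

lemma exA_rank_ge : 3 ≤ exA.rank := by
  apply rank_ge_of_submatrix exA ![0, 1, 4] ![1, 4, 5]
  have : (exA.submatrix ![0, 1, 4] ![1, 4, 5]).det ≠ 0 := by
    rw [Matrix.det_fin_three]
    simp [exA, Matrix.submatrix_apply]
  exact isUnit_iff_ne_zero.mpr this

lemma exA_symm : exA.IsSymm := by
  rw [Matrix.IsSymm]
  ext i j
  fin_cases i <;> fin_cases j <;> norm_num [exA]

lemma exA_pattern : ∀ i j : Fin 7, i ≠ j →
    (exA i j ≠ 0 ↔
      ((i.val + 1, j.val + 1) ∈ atlas932Edges ∨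
       (j.val + 1, i.val + 1) ∈ atlas932Edges)) := by
  intro i j hij
  fin_cases i <;> fin_cases j <;>
    first
      | exact absurd rfl hij
      | norm_num [exA, atlas932Edges]

/-- Graph number 932 in the Atlas of Graphs has minimum rank 3 over the reals:
3 is the least element of the set of ranks of real symmetric 7×7 matrices whose
off-diagonal zero/nonzero pattern matches the edges of the graph. -/
theorem atlas932_minRank_eq_three :
    IsLeast {r : ℕ | ∃ A : Matrix (Fin 7) (Fin 7) ℝ, A.IsSymm ∧
        (∀ i j : Fin 7, i ≠ j →
          (A i j ≠ 0 ↔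
            ((i.val + 1, j.val + 1) ∈ atlas932Edges ∨
             (j.val + 1, i.val + 1) ∈ atlas932Edges))) ∧
        A.rank = r} 3 := by
  constructor
  · exact ⟨exA, exA_symm, exA_pattern, le_antisymm exA_rank_le exA_rank_ge⟩
  · rintro r ⟨A, hsymm, hpat, rfl⟩
    apply rank_ge_of_submatrix A ![0, 1, 4] ![1, 4, 5]
    -- The vertices 1,2,5,6 (one-based) induce a path, giving an invertible 3×3 submatrix.
    have h01 : A 0 1 ≠ 0 := (hpat 0 1 (by decide)).mpr (by decide)
    have h14 : A 1 4 ≠ 0 := (hpat 1 4 (by decide)).mpr (by decide)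
    have h45 : A 4 5 ≠ 0 := (hpat 4 5 (by decide)).mpr (by decide)
    have h04 : A 0 4 = 0 := by
      by_contra h
      have := (hpat 0 4 (by decide)).mp h
      revert this; decide
    have h05 : A 0 5 = 0 := by
      by_contra h
      have := (hpat 0 5 (by decide)).mp h
      revert this; decide
    have h15 : A 1 5 = 0 := by
      by_contra h
      have := (hpat 1 5 (by decide)).mp h
      revert this; decide
    have hdet : (A.submatrix ![0, 1, 4] ![1, 4, 5]).det = A 0 1 * A 1 4 * A 4 5 := by
      rw [Matrix.det_fin_three]
      simp [Matrix.det_fin_three, Matrix.submatrix_apply, h04, h05, h15]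
      try ring
    rw [hdet]
    exact isUnit_iff_ne_zero.mpr (mul_ne_zero (mul_ne_zero h01 h14) h45)
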